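/- arXiv:1104.1376 — 2 statements merged into one kernel-verified Lean document; each statement's English description precedes it below -/
import Mathlib

section
/- Let n ≥ 1, let V be a real inner product space, let ζ ∈ V, let v ∈ V with ‖v‖ < 1, and let z ∈ ℂ with Im z ≠ 0. Then ‖ζ‖² − 2z⟨ζ,v⟩ − (1 − ‖v‖²)z² ≠ 0 (as a complex number, where ‖ζ‖², ⟨ζ,v⟩ are real scalars). -/
/-- Semiclassical ellipticity of the conjugated symbol
`‖ζ‖² − 2z⟨ζ,v⟩ − (1 − ‖v‖²)z²` for non-real `z`, when `‖v‖ < 1`. -/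
theorem stmt_0 (n : ℕ) (hn : 1 ≤ n)
    {V : Type*} [NormedAddCommGroup V] [InnerProductSpace ℝ V]
    (ζ v : V) (hv : ‖v‖ < 1) (z : ℂ) (hz : z.im ≠ 0) :
    ((‖ζ‖ ^ 2 : ℝ) : ℂ) - 2 * z * ((inner ℝ ζ v : ℝ) : ℂ)
      - (1 - (‖v‖ ^ 2 : ℝ)) * z ^ 2 ≠ 0 := by
  intro h
  have hre := congrArg Complex.re h
  have him := congrArg Complex.im h
  simp [Complex.mul_re, Complex.mul_im, pow_two] at hre him
  have hc : (0:ℝ) < 1 - ‖v‖ * ‖v‖ := by nlinarith [norm_nonneg v]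
  have h3 : z.im * ((inner ℝ ζ v : ℝ) + (1 - ‖v‖ * ‖v‖) * z.re) = 0 := by
    linear_combination -him / 2
  have him2 : (inner ℝ ζ v : ℝ) + (1 - ‖v‖ * ‖v‖) * z.re = 0 :=
    (mul_eq_zero.mp h3).resolve_left hz
  have h4 : (inner ℝ ζ v : ℝ) * z.re + (1 - ‖v‖ * ‖v‖) * (z.re * z.re) = 0 := by
    linear_combination z.re * him2
  nlinarith [mul_self_nonneg ‖ζ‖, mul_pos hc (mul_self_pos.mpr hz),
    mul_nonneg hc.le (mul_self_nonneg z.re), hre, h4]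
end

section
/- Let z ∈ ℂ with Im z ≠ 0, let μ > −1, ξ ∈ ℝ, η ∈ ℝ^{n−1}, and set p_{ℏ,z} = 4μξ² − 4zξ − z² + ‖η‖². If Im p_{ℏ,z} = 0 and (z, η) ≠ (0, 0), then Re p_{ℏ,z} = (1 + μ)(Re z)² + (Im z)² + ‖η‖² > 0; in particular p_{ℏ,z} ≠ 0. Hence for Im z ≠ 0 the symbol p_{ℏ,z} is elliptic (nonvanishing) on {μ > −1}. -/
/-- Semiclassical ellipticity of `p_{ℏ,z} = 4μξ² − 4zξ − z² + ‖η‖²` on `{μ > −1}`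
for `Im z ≠ 0`: if `Im p_{ℏ,z} = 0` and `(z,η) ≠ (0,0)` then
`Re p_{ℏ,z} = (1+μ)(Re z)² + (Im z)² + ‖η‖² > 0`; in any case `p_{ℏ,z} ≠ 0`. -/
theorem stmt_10 (n : ℕ) (z : ℂ) (hz : z.im ≠ 0) (μ ξ : ℝ) (hμ : -1 < μ)
    (η : EuclideanSpace ℝ (Fin (n - 1))) :
    ((((4 * μ * ξ ^ 2 : ℝ) : ℂ) - 4 * z * (ξ : ℂ) - z ^ 2
          + ((‖η‖ ^ 2 : ℝ) : ℂ)).im = 0 → ¬(z = 0 ∧ η = 0) →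
      (((4 * μ * ξ ^ 2 : ℝ) : ℂ) - 4 * z * (ξ : ℂ) - z ^ 2
          + ((‖η‖ ^ 2 : ℝ) : ℂ)).re
        = (1 + μ) * z.re ^ 2 + z.im ^ 2 + ‖η‖ ^ 2 ∧
      0 < (((4 * μ * ξ ^ 2 : ℝ) : ℂ) - 4 * z * (ξ : ℂ) - z ^ 2
          + ((‖η‖ ^ 2 : ℝ) : ℂ)).re) ∧
    ((4 * μ * ξ ^ 2 : ℝ) : ℂ) - 4 * z * (ξ : ℂ) - z ^ 2
        + ((‖η‖ ^ 2 : ℝ) : ℂ) ≠ 0 := by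
  set p : ℂ := (((4 * μ * ξ ^ 2 : ℝ) : ℂ) - 4 * z * (ξ : ℂ) - z ^ 2
      + ((‖η‖ ^ 2 : ℝ) : ℂ)) with hp
  have him : p.im = -4 * z.im * ξ - 2 * z.re * z.im := by
    simp [hp, pow_two, Complex.mul_im, Complex.mul_re]
    ring
  have hre : p.re = 4 * μ * ξ ^ 2 - 4 * z.re * ξ - (z.re ^ 2 - z.im ^ 2) + ‖η‖ ^ 2 := by
    simp [hp, pow_two, Complex.mul_im, Complex.mul_re]
    try ring
  have key : p.im = 0 → p.re = (1 + μ) * z.re ^ 2 + z.im ^ 2 + ‖η‖ ^ 2 ∧ 0 < p.re := by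
    intro h0
    have hξ : ξ = -z.re / 2 := by
      rw [him] at h0
      have : z.im * (-2 * (2 * ξ + z.re)) = 0 := by linarith [h0]
      rcases mul_eq_zero.1 this with h | h
      · exact absurd h hz
      · linarith
    subst hξ
    have hre2 : p.re = (1 + μ) * z.re ^ 2 + z.im ^ 2 + ‖η‖ ^ 2 := by
      rw [hre]; ring
    refine ⟨hre2, ?_⟩
    rw [hre2]
    have h1 : 0 ≤ (1 + μ) * z.re ^ 2 := mul_nonneg (by linarith) (sq_nonneg _)
    have h2 : 0 < z.im ^ 2 := by positivity
    have h3 : 0 ≤ ‖η‖ ^ 2 := by positivity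
    linarith
  refine ⟨fun h0 _ => key h0, fun hzero => ?_⟩
  have h1 : p.im = 0 := by rw [hzero]; simp
  have h2 : p.re = 0 := by rw [hzero]; simp
  exact absurd h2 (ne_of_gt (key h1).2)
end
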